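/- Let ς be a complex-analytic function on a neighborhood of 0 in ℂ with ς(0) real and ς(0) < 0. Then there exist Z₀ > 0 and C > 0 such that for every real Z ≥ Z₀ and each sign s ∈ {+1, −1} there exists k ∈ ℂ satisfying −Z k² ς(k) = 1 and |k − ( s/√(Z |ς(0)|) + ς'(0)/(2 Z ς(0)²) )| ≤ C Z^{−3/2}. -/

import Mathlib

open Metric Set

/-- Second-order Taylor bound for an analytic function at `0`. -/
lemma taylor2_bound {g : ℂ → ℂ} (hg : AnalyticAt ℂ g 0) :
    ∃ r > (0:ℝ), ∃ M : ℝ, 0 ≤ M ∧ ∀ y : ℂ, ‖y‖ ≤ r →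
      ‖g y - (g 0 + y * deriv g 0)‖ ≤ M * ‖y‖ ^ 2 := by
  obtain ⟨q, hq⟩ := hg
  have hps : ∀ y : ℂ, q.partialSum 2 y = g 0 + y * deriv g 0 := by
    intro y
    have h0 : (q 0 fun _ => y) = g 0 := hq.coeff_zero _
    have h1 : (q 1 fun _ => y) = y * deriv g 0 := by
      have hd : deriv g 0 = q 1 fun _ => 1 := hq.deriv
      have hsm : (fun _ : Fin 1 => y) = fun i => (fun _ : Fin 1 => y) i • (fun _ : Fin 1 => (1:ℂ)) i := by
        funext i; simp
      rw [hd, hsm, (q 1).map_smul_univ]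
      simp [smul_eq_mul, mul_comm]
    have hc0 : q.coeff 0 = g 0 := by
      rw [← h0]; unfold FormalMultilinearSeries.coeff; congr 1; funext i; exact i.elim0
    simp only [FormalMultilinearSeries.partialSum, Finset.sum_range_succ,
      Finset.sum_range_zero, zero_add]
    have e0 : ((q 0) fun _ => y) = q.coeff 0 := by
      unfold FormalMultilinearSeries.coeff; congr 1; funext i; exact i.elim0
    rw [e0, h1, hc0]
  have hO := hq.isBigO_sub_partialSum_pow 2
  rw [Asymptotics.isBigO_iff] at hO
  obtain ⟨M, hM⟩ := hO
  rw [Metric.eventually_nhds_iff] at hM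
  obtain ⟨r, hr0, hr⟩ := hM
  refine ⟨r / 2, by linarith, max M 0, le_max_right _ _, fun y hy => ?_⟩
  have hyr : dist y (0:ℂ) < r := by
    simpa [dist_eq_norm] using lt_of_le_of_lt hy (by linarith)
  have := hr hyr
  simp only [zero_add, hps] at this
  calc ‖g y - (g 0 + y * deriv g 0)‖ ≤ M * ‖‖y‖ ^ 2‖ := this
    _ ≤ max M 0 * ‖y‖ ^ 2 := by
        rw [Real.norm_of_nonneg (by positivity)]
        exact mul_le_mul_of_nonneg_right (le_max_left _ _) (by positivity)

/-- Quantitative local surjectivity for a map with invertible strict derivative at 0. -/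
lemma quant_surj' {F : ℂ → ℂ} {a : ℝ} (ha : 0 < a)
    (hF : HasStrictDerivAt F ((a : ℂ)) 0) :
    ∃ s ∈ nhds (0:ℂ), ∀ k₀ : ℂ, ∀ δ : ℝ, 0 ≤ δ → closedBall k₀ δ ⊆ s →
      SurjOn F (closedBall k₀ δ) (closedBall (F k₀) (a / 2 * δ)) := by
  have ha0 : (a : ℂ) ≠ 0 := by exact_mod_cast ha.ne'
  set L : ℂ →L[ℂ] ℂ := (1 : ℂ →L[ℂ] ℂ).smulRight ((a : ℂ)) with hL
  have hna : ‖(a:ℂ)‖ = a := by rw [Complex.norm_real, Real.norm_of_nonneg ha.le]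
  have hFD : HasStrictFDerivAt F L 0 := hF.hasStrictFDerivAt
  set c : NNReal := ‖(a:ℂ)‖₊ / 2 with hc
  have hcpos : 0 < c := by
    rw [hc]
    have : ‖(a:ℂ)‖₊ ≠ 0 := by simpa using ha0
    positivity
  obtain ⟨s, hs, happ⟩ := hFD.approximates_deriv_on_nhds (Or.inr hcpos)
  refine ⟨s, hs, fun k₀ δ hδ hsub => ?_⟩
  set rinv : L.NonlinearRightInverse :=
    { toFun := fun y => y / (a : ℂ)
      nnnorm := ‖(a:ℂ)‖₊⁻¹
      bound' := fun y => by
        rw [norm_div]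
        rw [NNReal.coe_inv, coe_nnnorm]
        rw [div_eq_inv_mul]
      right_inv' := fun y => by
        simp only [hL, ContinuousLinearMap.smulRight_apply, ContinuousLinearMap.one_apply,
          smul_eq_mul]
        field_simp } with hrinv
  have key := (happ.mono_set hsub).surjOn_closedBall_of_nonlinearRightInverse rinv hδ
    (Subset.refl _)
  have hrad : ((rinv.nnnorm : ℝ)⁻¹ - (c:ℝ)) * δ = a / 2 * δ := by
    have h1 : ((rinv.nnnorm : ℝ)) = a⁻¹ := by
      rw [hrinv]; simp only [NNReal.coe_inv, coe_nnnorm, hna]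
    have h2 : ((c : NNReal) : ℝ) = a / 2 := by
      rw [hc]; rw [NNReal.coe_div, coe_nnnorm, hna]; norm_num
    rw [h1, h2, inv_inv]; ring
  rw [hrad] at key
  exact key

lemma aux1 {a D ε : ℝ} (ha : 0 < a) (hD : 0 ≤ D) (hε : 0 < ε) (hε1 : ε ≤ 1) :
    ε/a + D*ε^2 ≤ (1/a + D)*ε := by
  have h1 : D*ε^2 ≤ D*ε := by
    have : ε^2 ≤ ε := by nlinarith [mul_le_mul_of_nonneg_left hε1 hε.le]
    exact mul_le_mul_of_nonneg_left this hD
  have h2 : ε/a = (1/a)*ε := by ring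
  nlinarith

lemma aux2 {K ε r : ℝ} (hK : 0 < K) (h : ε ≤ r/K) : K*ε ≤ r := by
  have := (le_div_iff₀ hK).1 h
  linarith

lemma aux4 {ε : ℝ} (hε : 0 < ε) (hε1 : ε ≤ 1) : ε^3 ≤ ε := by
  nlinarith [pow_le_one₀ hε.le hε1 (n := 2), sq_nonneg ε, mul_le_mul_of_nonneg_left hε1 (sq_nonneg ε)]

lemma aux3 {a D B M ε : ℝ} (ha : 0 < a) (hD : 0 ≤ D) (hB : 0 ≤ B) (hM : 0 ≤ M)
    (hε : 0 < ε) (hε1 : ε ≤ 1) :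
    B*(2*(ε/a)*(D*ε^2) + (D*ε^2)^2) + M*(ε/a + D*ε^2)^3
      ≤ (B*(2*D/a + D^2) + M*(1/a + D)^3 + 1) * ε^3 := by
  have e4 : ε^4 ≤ ε^3 := by
    have h3 : (0:ℝ) ≤ ε^3 := by positivity
    calc ε^4 = ε^3 * ε := by ring
      _ ≤ ε^3 * 1 := mul_le_mul_of_nonneg_left hε1 h3
      _ = ε^3 := by ring
  have e5 : ε/a + D*ε^2 ≤ (1/a + D)*ε := aux1 ha hD hε hε1
  have e6 : (ε/a + D*ε^2)^3 ≤ ((1/a+D)*ε)^3 := by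
    apply pow_le_pow_left₀ (by positivity) e5 3
  have e7 : M * (ε/a + D*ε^2)^3 ≤ M * ((1/a+D)*ε)^3 := mul_le_mul_of_nonneg_left e6 hM
  have e8 : B*(2*(ε/a)*(D*ε^2) + (D*ε^2)^2) = B*(2*D/a)*ε^3 + B*D^2*ε^4 := by ring
  have e9 : ((1/a+D)*ε)^3 = (1/a+D)^3 * ε^3 := by ring
  have e10 : B*D^2*ε^4 ≤ B*D^2*ε^3 := mul_le_mul_of_nonneg_left e4 (by positivity)
  have e11 : 0 ≤ ε^3 := by positivity
  nlinarith [e7, e8, e9, e10, e11]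

lemma aux5 {a C₁ ε : ℝ} (ha : a ≠ 0) : a/2 * (2*C₁/a*ε^3) = C₁ * ε^3 := by
  field_simp

lemma key_identity (aC d sC RC : ℂ) (ha : aC ≠ 0) (hR : RC ≠ 0) (hs : sC^2 = 1) :
    (sC/(RC*aC) + d/(2*RC^2*(-aC^2)^2)) * (aC + (sC/(RC*aC) + d/(2*RC^2*(-aC^2)^2)) * (-d/(2*aC)))
      - sC/RC
    = (-d/(2*aC)) * (2*(sC/(RC*aC))*(d/(2*RC^2*(-aC^2)^2)) + (d/(2*RC^2*(-aC^2)^2))^2) := by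
  set uC : ℂ := sC/(RC*aC) with huC
  set v : ℂ := d/(2*RC^2*(-aC^2)^2) with hv
  set b : ℂ := -d/(2*aC) with hb
  have P1 : uC * aC = sC / RC := by
    rw [huC]; field_simp
  have P2 : v * aC + b * uC^2 = 0 := by
    have hu2 : uC^2 = 1/((RC*aC)^2) := by rw [huC, div_pow, hs]
    rw [hu2, hv, hb]
    field_simp
    ring
  have expand : (uC + v) * (aC + (uC + v) * b) - sC/RC
      = (uC*aC - sC/RC) + (v*aC + b*uC^2) + b*(2*uC*v + v^2) := by ring
  rw [expand, P1, P2]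
  ring

set_option maxHeartbeats 2000000 in
/-- Scalar core of the springy-coating resonance theorem: if `ς` is
analytic near `0` with `ς(0)` real and negative, then there are `Z₀, C > 0` such that
for every `Z ≥ Z₀` and each sign `s = ±1` there is a root `k` of `-Z k² ς(k) = 1` with
`|k - (s/√(Z|ς(0)|) + ς'(0)/(2Zς(0)²))| ≤ C Z^{-3/2}`. -/
theorem springy_coating_resonances
    (ς : ℂ → ℂ) (hς : AnalyticAt ℂ ς 0)
    (him : (ς 0).im = 0) (hre : (ς 0).re < 0) :
    ∃ Z₀ > (0 : ℝ), ∃ C > (0 : ℝ), ∀ Z : ℝ, Z₀ ≤ Z → ∀ s : ℝ, s = 1 ∨ s = -1 →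
      ∃ k : ℂ, -(Z : ℂ) * k ^ 2 * ς k = 1 ∧
        ‖k - (((s / Real.sqrt (Z * ‖ς 0‖)) : ℝ) +
            deriv ς 0 / (2 * (Z : ℂ) * (ς 0) ^ 2))‖
          ≤ C * Z ^ (-(3 : ℝ) / 2) := by
  set α : ℝ := -(ς 0).re with hαdef
  have hα : 0 < α := by simp only [hαdef]; linarith
  set a : ℝ := Real.sqrt α with hadef
  have ha : 0 < a := Real.sqrt_pos.2 hα
  have ha0 : (a:ℂ) ≠ 0 := by exact_mod_cast ha.ne'
  have hape : a ^ 2 = α := Real.sq_sqrt hα.le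
  have hςα : ς 0 = ((-α : ℝ) : ℂ) := by
    apply Complex.ext
    · simp [hαdef]
    · simp [him]
  have hς0 : ς 0 = -((a:ℂ)^2) := by
    rw [hςα, ← hape]; push_cast; ring
  have hmς : -ς 0 = ((α:ℝ):ℂ) := by rw [hςα]; push_cast; ring
  -- the analytic square root g of -ς
  set g : ℂ → ℂ := fun k => (-ς k) ^ (2⁻¹ : ℂ) with hgdef
  have hgapp : ∀ k, g k = (-ς k) ^ (2⁻¹ : ℂ) := fun k => by rw [hgdef]
  have hslit : -ς 0 ∈ Complex.slitPlane := by
    rw [Complex.mem_slitPlane_iff]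
    left; rw [hmς]; simpa using hα
  have hg : AnalyticAt ℂ g 0 := (hς.neg).cpow analyticAt_const hslit
  have hsqα : α ^ ((2:ℝ)⁻¹) = a := by
    rw [hadef, Real.sqrt_eq_rpow]; norm_num
  have hg0 : g 0 = (a:ℂ) := by
    rw [hgapp, hmς]
    have h1 := Complex.ofReal_cpow hα.le 2⁻¹
    rw [show (((2:ℝ)⁻¹:ℝ):ℂ) = (2⁻¹:ℂ) by norm_num] at h1
    rw [← h1]
    exact_mod_cast congrArg Complex.ofReal hsqα
  -- derivative of g at 0
  have hd : HasDerivAt ς (deriv ς 0) 0 := hς.differentiableAt.hasDerivAt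
  have hgd : HasDerivAt g ((2⁻¹:ℂ) * (-ς 0) ^ ((2⁻¹:ℂ) - 1) * (-(deriv ς 0))) 0 := by
    rw [hgdef]
    exact hd.neg.cpow_const hslit
  set b : ℂ := -(deriv ς 0) / (2*(a:ℂ)) with hbdef
  have hpow : (-ς 0) ^ ((2⁻¹:ℂ) - 1) = ((a:ℂ))⁻¹ := by
    rw [hmς]
    have h2 : ((2⁻¹:ℂ) - 1) = ((-(2:ℝ)⁻¹ : ℝ):ℂ) := by push_cast; ring
    rw [h2, ← Complex.ofReal_cpow hα.le]
    rw [Real.rpow_neg hα.le, hsqα]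
    push_cast
    ring
  have hgd' : HasDerivAt g b 0 := by
    convert hgd using 1
    rw [hpow, hbdef]
    field_simp
  have hderiv : deriv g 0 = b := hgd'.deriv
  -- Taylor bound
  obtain ⟨r₁, hr₁, M, hM0, hTay⟩ := taylor2_bound hg
  have hTay' : ∀ y : ℂ, ‖y‖ ≤ r₁ → ‖g y - ((a:ℂ) + y*b)‖ ≤ M*‖y‖^2 := by
    intro y hy
    have := hTay y hy
    rwa [hg0, hderiv] at this
  -- F and its strict derivative
  set F : ℂ → ℂ := fun k => k * g k with hFdef
  have hgs : HasStrictDerivAt g (deriv g 0) 0 := by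
    obtain ⟨q, hq⟩ := hg
    have := hq.hasStrictDerivAt
    rwa [← hq.deriv] at this
  have hFs : HasStrictDerivAt F ((a:ℂ)) 0 := by
    rw [hFdef]
    have h := (hasStrictDerivAt_id (0:ℂ)).mul hgs
    simp only [hg0, id_eq, one_mul, zero_mul, add_zero] at h
    exact h
  obtain ⟨sset, hsset, hsurj⟩ := quant_surj' ha hFs
  -- square root squares back, eventually
  have hne0 : -ς 0 ≠ 0 := by
    rw [hmς]
    simpa using hα.ne'
  have hsq : ∀ᶠ k in nhds (0:ℂ), g k ^ 2 = -ς k := by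
    filter_upwards [(hς.continuousAt.neg).eventually_ne hne0] with k hk
    rw [hgapp, sq, ← Complex.cpow_add _ _ (by simpa using hk)]
    norm_num
  have hmem : {k : ℂ | g k ^ 2 = -ς k} ∩ sset ∈ nhds (0:ℂ) := Filter.inter_mem hsq hsset
  obtain ⟨r₂, hr₂, hball⟩ := Metric.mem_nhds_iff.1 hmem
  set r : ℝ := min (r₂/2) r₁ with hrdef
  have hr : 0 < r := lt_min (by linarith) hr₁
  have hrprop : ∀ x : ℂ, ‖x‖ ≤ r → (g x^2 = -ς x ∧ x ∈ sset) := by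
    intro x hx
    have hx2 : x ∈ Metric.ball (0:ℂ) r₂ := by
      rw [mem_ball, dist_zero_right]
      have : r ≤ r₂ / 2 := min_le_left _ _
      linarith
    exact hball hx2
  -- constants
  set d : ℂ := deriv ς 0 with hddef
  set D : ℝ := ‖d‖ / (2*α^2) with hDdef
  have hD0 : 0 ≤ D := by positivity
  set B : ℝ := ‖b‖ with hBdef
  have hB0 : 0 ≤ B := norm_nonneg b
  set C₁ : ℝ := B*(2*D/a + D^2) + M*(1/a + D)^3 + 1 with hC₁def
  have hC₁ : 0 < C₁ := by positivity
  set K : ℝ := 1/a + D + 2*C₁/a with hKdef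
  have hK : 0 < K := by positivity
  set ε₀ : ℝ := min 1 (r/K) with hε₀def
  have hε₀ : 0 < ε₀ := lt_min one_pos (by positivity)
  refine ⟨max 1 (ε₀⁻¹^2), lt_of_lt_of_le one_pos (le_max_left _ _), 2*C₁/a, by positivity,
    fun Z hZ s hs => ?_⟩
  clear_value α a g b F d D B C₁ K ε₀ r
  have hZ1 : (1:ℝ) ≤ Z := le_trans (le_max_left _ _) hZ
  have hZ0 : (0:ℝ) < Z := by linarith
  set R : ℝ := Real.sqrt Z with hRdef
  have hR0 : 0 < R := Real.sqrt_pos.2 hZ0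
  have hR2 : R^2 = Z := Real.sq_sqrt hZ0.le
  have hR1 : 1 ≤ R := by
    rw [hRdef, show (1:ℝ) = Real.sqrt 1 by simp]
    exact Real.sqrt_le_sqrt hZ1
  clear_value R
  set ε : ℝ := R⁻¹ with hεdef
  have hε0 : 0 < ε := by positivity
  have hε1 : ε ≤ 1 := by
    rw [hεdef]
    have := inv_anti₀ one_pos hR1
    simpa using this
  have hεε₀ : ε ≤ ε₀ := by
    have h1 : ε₀⁻¹^2 ≤ Z := le_trans (le_max_right _ _) hZ
    have h2 : ε₀⁻¹ ≤ R := by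
      have h2' := Real.sqrt_le_sqrt h1
      rwa [Real.sqrt_sq (inv_pos.2 hε₀).le, ← hRdef] at h2'
    have h3 := inv_anti₀ (inv_pos.2 hε₀) h2
    rwa [inv_inv] at h3
  have hεZ : ε^2 = Z⁻¹ := by
    rw [hεdef, ← hR2]
    rw [inv_pow]
  clear_value ε
  -- sign facts
  have hs2 : s^2 = 1 := by rcases hs with h|h <;> rw [h] <;> norm_num
  have hsabs : |s| = 1 := by rcases hs with h|h <;> rw [h] <;> norm_num
  -- the predicted root
  have htarget : Real.sqrt (Z * ‖ς 0‖) = R * a := by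
    rw [hςα, Complex.norm_real, Real.norm_eq_abs, abs_neg, abs_of_pos hα, Real.sqrt_mul hZ0.le, ← hRdef, ← hadef]
  set u : ℝ := s / (R * a) with hu
  set v : ℂ := d / (2*(Z:ℂ)*(ς 0)^2) with hv
  set k₀ : ℂ := ((u:ℝ):ℂ) + v with hk₀
  have habs_u : |u| = ε/a := by
    rw [hu, abs_div, hsabs, abs_of_pos (by positivity : (0:ℝ) < R * a), hεdef]
    field_simp
  have habs_v : ‖v‖ = D * ε^2 := by
    rw [hv, norm_div, hDdef]
    have h1 : ‖2*(Z:ℂ)*(ς 0)^2‖ = 2*Z*α^2 := by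
      rw [hςα]
      rw [norm_mul, norm_mul, norm_pow, Complex.norm_real, Complex.norm_real, Complex.norm_two]
      rw [Real.norm_eq_abs, Real.norm_eq_abs, abs_of_pos hZ0, abs_neg, abs_of_pos hα]
    rw [h1, hεZ]
    rw [mul_comm (‖d‖ / (2*α^2)) Z⁻¹, inv_mul_eq_div, div_div]
    ring_nf
  have hk₀abs : ‖k₀‖ ≤ ε/a + D*ε^2 := by
    rw [hk₀]
    calc ‖((u:ℝ):ℂ) + v‖ ≤ ‖((u:ℝ):ℂ)‖ + ‖v‖ :=
          norm_add_le _ _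
      _ = ε/a + D*ε^2 := by rw [Complex.norm_real, Real.norm_eq_abs, habs_u, habs_v]
  clear_value u v k₀
  have hZC : ((R:ℝ):ℂ)^2 = (Z:ℂ) := by exact_mod_cast hR2
  have hRC0 : ((R:ℝ):ℂ) ≠ 0 := by exact_mod_cast hR0.ne'
  -- the key algebraic identity
  have hsC2 : ((s:ℝ):ℂ)^2 = 1 := by exact_mod_cast hs2
  have hsRC : (((s/R : ℝ):ℝ):ℂ) = ((s:ℝ):ℂ)/((R:ℝ):ℂ) := by push_cast; ring
  have huC : ((u:ℝ):ℂ) = ((s:ℝ):ℂ)/(((R:ℝ):ℂ)*((a:ℝ):ℂ)) := by rw [hu]; push_cast; ring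
  have hvC : v = d/(2*((R:ℝ):ℂ)^2*(-((a:ℝ):ℂ)^2)^2) := by rw [hv, hς0, ← hZC]
  have key : k₀ * ((a:ℂ) + k₀ * b) - (((s/R : ℝ):ℝ):ℂ) = b * (2*((u:ℝ):ℂ)*v + v^2) := by
    rw [hk₀, huC, hvC, hbdef, hsRC]
    exact key_identity ((a:ℝ):ℂ) d ((s:ℝ):ℂ) ((R:ℝ):ℂ) ha0 hRC0 hsC2
  -- bound on F k₀ - s/R
  have h1aD : ε/a + D*ε^2 ≤ (1/a + D)*ε := aux1 ha hD0 hε0 hε1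
  have hKr : K * ε ≤ r :=
    aux2 hK (le_trans hεε₀ (by rw [hε₀def]; exact min_le_right _ _))
  have hk₀r : ‖k₀‖ ≤ r := by
    have h2 : (1/a + D)*ε ≤ K*ε := by
      have h0 : 0 < 2*C₁/a := div_pos (by linarith) ha
      have h00 : (1/a + D) ≤ K := by rw [hKdef]; linarith
      exact mul_le_mul_of_nonneg_right h00 hε0.le
    linarith [hk₀abs, h1aD]
  have hTk₀ : ‖g k₀ - ((a:ℂ) + k₀*b)‖ ≤ M*‖k₀‖^2 :=
    hTay' k₀ (le_trans hk₀r (by rw [hrdef]; exact min_le_right _ _))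
  have hFk₀ : ‖F k₀ - (((s/R : ℝ):ℝ):ℂ)‖ ≤ C₁ * ε^3 := by
    have decomp : F k₀ - (((s/R : ℝ):ℝ):ℂ) =
        (k₀*((a:ℂ)+k₀*b) - (((s/R : ℝ):ℝ):ℂ)) + k₀*(g k₀ - ((a:ℂ)+k₀*b)) := by
      rw [hFdef]; ring
    rw [decomp]
    have t1 : ‖k₀*((a:ℂ)+k₀*b) - (((s/R : ℝ):ℝ):ℂ)‖
        ≤ B*(2*(ε/a)*(D*ε^2) + (D*ε^2)^2) := by
      rw [key, norm_mul, ← hBdef]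
      apply mul_le_mul_of_nonneg_left _ hB0
      calc ‖2*((u:ℝ):ℂ)*v + v^2‖
          ≤ ‖2*((u:ℝ):ℂ)*v‖ + ‖v^2‖ := norm_add_le _ _
        _ = 2*(ε/a)*(D*ε^2) + (D*ε^2)^2 := by
            rw [norm_mul, norm_mul, norm_pow, Complex.norm_two, Complex.norm_real, Real.norm_eq_abs, habs_u, habs_v]
    have t2 : ‖k₀*(g k₀ - ((a:ℂ)+k₀*b))‖
        ≤ (ε/a + D*ε^2) * (M*(ε/a + D*ε^2)^2) := by
      rw [norm_mul]
      have hn : ‖g k₀ - ((a:ℂ)+k₀*b)‖ ≤ M*(ε/a + D*ε^2)^2 := by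
        refine le_trans hTk₀ ?_
        have : ‖k₀‖^2 ≤ (ε/a + D*ε^2)^2 := by
          apply pow_le_pow_left₀ (norm_nonneg _) _ 2
          exact hk₀abs
        exact mul_le_mul_of_nonneg_left this hM0
      exact mul_le_mul hk₀abs hn (norm_nonneg _) (by positivity)
    calc ‖(k₀*((a:ℂ)+k₀*b) - (((s/R : ℝ):ℝ):ℂ)) + k₀*(g k₀ - ((a:ℂ)+k₀*b))‖
        ≤ ‖k₀*((a:ℂ)+k₀*b) - (((s/R : ℝ):ℝ):ℂ)‖
          + ‖k₀*(g k₀ - ((a:ℂ)+k₀*b))‖ := norm_add_le _ _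
      _ ≤ B*(2*(ε/a)*(D*ε^2) + (D*ε^2)^2) + (ε/a + D*ε^2) * (M*(ε/a + D*ε^2)^2) :=
          add_le_add t1 t2
      _ ≤ C₁ * ε^3 := by
          have hexp : (ε/a + D*ε^2) * (M*(ε/a + D*ε^2)^2) = M * (ε/a + D*ε^2)^3 := by ring
          rw [hexp, hC₁def]
          exact aux3 ha hD0 hB0 hM0 hε0 hε1
  -- apply quantitative surjectivity
  set δ : ℝ := 2*C₁/a * ε^3 with hδdef
  have hδ0 : 0 ≤ δ := by
    rw [hδdef]
    exact le_of_lt (mul_pos (div_pos (by linarith) ha) (pow_pos hε0 3))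
  have hsubr : closedBall k₀ δ ⊆ closedBall (0:ℂ) r := by
    intro x hx
    rw [mem_closedBall, dist_zero_right]
    have h1 : dist x k₀ ≤ δ := mem_closedBall.1 hx
    have h2 : ‖x‖ ≤ dist x k₀ + ‖k₀‖ := by
      calc ‖x‖ = dist x 0 := (dist_zero_right x).symm
        _ ≤ dist x k₀ + dist k₀ 0 := dist_triangle _ _ _
        _ = dist x k₀ + ‖k₀‖ := by rw [dist_zero_right]
    have h3 : ε^3 ≤ ε := aux4 hε0 hε1
    have h4 : ‖k₀‖ ≤ (1/a + D)*ε := by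
      linarith [hk₀abs, h1aD]
    have h5 : δ ≤ 2*C₁/a * ε := by
      rw [hδdef]
      exact mul_le_mul_of_nonneg_left h3 (le_of_lt (div_pos (by linarith) ha))
    have h6 : (1/a + D)*ε + 2*C₁/a*ε = K*ε := by rw [hKdef]; ring
    linarith [hKr]
  have hsubs : closedBall k₀ δ ⊆ sset := by
    intro x hx
    have := hsubr hx
    rw [mem_closedBall, dist_zero_right] at this
    exact (hrprop x this).2
  have hsurjk := hsurj k₀ δ hδ0 hsubs
  have hmemt : (((s/R : ℝ):ℝ):ℂ) ∈ closedBall (F k₀) (a/2 * δ) := by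
    rw [mem_closedBall, dist_eq_norm]
    have heq : a/2 * δ = C₁ * ε^3 := by rw [hδdef]; exact aux5 ha.ne'
    rw [heq]
    calc ‖(((s/R : ℝ):ℝ):ℂ) - F k₀‖ = ‖F k₀ - (((s/R : ℝ):ℝ):ℂ)‖ := by
          rw [← norm_neg]; congr 1; ring
      _ ≤ C₁ * ε^3 := hFk₀
  obtain ⟨k, hkmem, hkF⟩ := hsurjk hmemt
  have hkr : ‖k‖ ≤ r := by
    have := hsubr hkmem
    rwa [mem_closedBall, dist_zero_right] at this
  have hksq : g k ^ 2 = -ς k := (hrprop k hkr).1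
  have hZC0 : (Z:ℂ) ≠ 0 := by exact_mod_cast hZ0.ne'
  have heq : -(Z:ℂ) * k^2 * ς k = 1 := by
    have h1 : k * g k = (((s/R : ℝ):ℝ):ℂ) := by
      rw [hFdef] at hkF; simpa using hkF
    have h2 : k^2 * (g k)^2 = (((s/R : ℝ):ℝ):ℂ)^2 := by rw [← mul_pow, h1]
    rw [hksq] at h2
    have h3 : ((((s/R : ℝ):ℝ):ℂ))^2 = ((Z:ℂ))⁻¹ := by
      push_cast
      rw [div_pow]
      have hsC : ((s:ℝ):ℂ)^2 = 1 := by exact_mod_cast congrArg (Complex.ofReal) hs2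
      rw [hsC, hZC]
      exact one_div _
    calc -(Z:ℂ) * k^2 * ς k = (Z:ℂ) * (k^2 * (-ς k)) := by ring
      _ = (Z:ℂ) * ((Z:ℂ))⁻¹ := by rw [h2, h3]
      _ = 1 := mul_inv_cancel₀ hZC0
  refine ⟨k, heq, ?_⟩
  have htarg : (((s / Real.sqrt (Z * ‖ς 0‖)):ℝ):ℂ) + v = k₀ := by
    rw [htarget, hk₀, hu]
  rw [htarg]
  have hdist : ‖k - k₀‖ ≤ δ := by
    have := mem_closedBall.1 hkmem
    rwa [Complex.dist_eq] at this
  have hrpow : (Z:ℝ) ^ (-(3:ℝ)/2) = ε^3 := by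
    have h1 : (Z:ℝ) ^ ((3:ℝ)/2) = R^3 := by
      rw [hRdef, Real.sqrt_eq_rpow, ← Real.rpow_natCast (Z ^ ((1:ℝ)/2)) 3,
        ← Real.rpow_mul hZ0.le]
      norm_num
    have h2 : (-(3:ℝ)/2) = -((3:ℝ)/2) := by norm_num
    rw [h2, Real.rpow_neg hZ0.le, h1, hεdef, inv_pow]
  rw [hrpow]
  calc ‖k - k₀‖ ≤ δ := hdist
    _ = 2*C₁/a * ε^3 := hδdef
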